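/- arXiv:1910.09071 — 2 statements merged into one kernel-verified Lean document; each statement's English description precedes it below -/
import Mathlib

section
/- Let g be a polynomial of degree N with g(0) ≠ 0 that does not vanish on the closed disk of radius b > 1. Then for every z with |z| ≤ 1, writing f(z) = log(g(z)) (a branch analytic on the disk), the error of truncating the Taylor series of f at 0 after degree K satisfies |f(z) − Σ_{k=0}^{K} (f^{(k)}(0)/k!) z^k| ≤ (N/(K+1)) · 1/(b^K (b−1)). -/
open Metric

lemma list_prod_eq (l : List ℂ) (f : ℂ → ℂ) :
    (l.map f).prod = ∏ i : Fin l.length, f (l.get i) := by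
  conv_lhs => rw [← List.ofFn_get l, List.map_ofFn]
  rw [List.prod_ofFn]; rfl

open Polynomial in
lemma eval_eq (g : Polynomial ℂ) (z : ℂ) :
    g.eval z = g.leadingCoeff * ∏ i : Fin g.roots.toList.length, (z - g.roots.toList.get i) := by
  conv_lhs => rw [(C_leadingCoeff_mul_prod_multiset_X_sub_C (p := g) IsAlgClosed.card_roots_eq_natDegree).symm]
  rw [eval_mul, eval_C, eval_multiset_prod]
  congr 1
  conv_lhs => rw [Multiset.map_map, ← g.roots.coe_toList, Multiset.map_coe, Multiset.prod_coe]
  rw [list_prod_eq]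
  simp

/-- Truncated Taylor series bound for the logarithm of a nonvanishing polynomial
(Prop. 3.3 (3), Barvinok). -/
theorem taylor_remainder_bound_log_polynomial
    (g : Polynomial ℂ) (N : ℕ) (hN : g.natDegree = N)
    (hg0 : g.eval 0 ≠ 0)
    (b : ℝ) (hb : 1 < b)
    (hroots : ∀ z ∈ closedBall (0 : ℂ) b, g.eval z ≠ 0)
    (f : ℂ → ℂ)
    (hf : DifferentiableOn ℂ f (closedBall 0 b))
    (hlog : ∀ z ∈ closedBall (0 : ℂ) b, Complex.exp (f z) = g.eval z)
    (K : ℕ) :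
    ∀ z : ℂ, ‖z‖ ≤ 1 →
      ‖f z - ∑ k ∈ Finset.range (K + 1),
          (iteratedDeriv k f 0 / (Nat.factorial k : ℂ)) * z ^ k‖
        ≤ ((N : ℝ) / (K + 1)) * (1 / (b ^ K * (b - 1))) := by
  have hb0 : (0:ℝ) < b := lt_trans one_pos hb
  set L := g.roots.toList.length with hLdef
  set ζ : Fin L → ℂ := g.roots.toList.get with hzdef
  have hLN : L ≤ N := by
    rw [hLdef, Multiset.length_toList, ← hN]
    exact g.card_roots'
  have hζ : ∀ i, b < ‖ζ i‖ := by
    intro i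
    by_contra hc
    push_neg at hc
    refine hroots (ζ i) (mem_closedBall_zero_iff.2 hc) ?_
    have : ζ i ∈ g.roots := by
      rw [← g.roots.mem_toList]; exact List.get_mem g.roots.toList i
    exact Polynomial.isRoot_of_mem_roots this
  have hζ0 : ∀ i, ζ i ≠ 0 := fun i => by
    intro h; have := hζ i; rw [h] at this; simp at this; linarith
  set c : ℕ → ℂ := fun n => if n = 0 then f 0 else -∑ i : Fin L, (ζ i)⁻¹ ^ n / n with hcdef
  set h : ℂ → ℂ := fun w => f 0 + ∑ i : Fin L, Complex.log (1 - w / ζ i) with hhdef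
  have hwz : ∀ (w : ℂ), ‖w‖ < b → ∀ i, ‖w / ζ i‖ < 1 := by
    intro w hw i
    rw [norm_div, div_lt_one (lt_trans hb0 (hζ i))]
    exact lt_trans hw (hζ i)
  have hne : ∀ (w : ℂ), ‖w‖ < b → ∀ i, (1 : ℂ) - w / ζ i ≠ 0 := by
    intro w hw i hcon
    have h1 : ‖w / ζ i‖ < 1 := hwz w hw i
    have : (w / ζ i) = 1 := by linear_combination -hcon
    rw [this] at h1; simp at h1
  have hsum : ∀ w : ℂ, ‖w‖ < b → HasSum (fun n => c n * w ^ n) (h w) := by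
    intro w hw
    have h1 : ∀ i : Fin L, HasSum (fun n : ℕ => -((w / ζ i) ^ n / n))
        (Complex.log (1 - w / ζ i)) := by
      intro i
      simpa using (Complex.hasSum_taylorSeries_neg_log (hwz w hw i)).neg
    have h2 : HasSum (fun n : ℕ => ∑ i : Fin L, -((w / ζ i) ^ n / n))
        (∑ i : Fin L, Complex.log (1 - w / ζ i)) :=
      hasSum_sum fun i _ => h1 i
    have h3 : HasSum (fun n : ℕ => if n = 0 then f 0 else 0) (f 0) := hasSum_ite_eq 0 (f 0)
    have h4 := h3.add h2
    convert h4 using 2 with n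
    rcases Nat.eq_zero_or_pos n with rfl | hn
    · simp [hcdef]
    · have hn0 : n ≠ 0 := hn.ne'
      simp only [hcdef, if_neg hn0, hn0, if_false, zero_add]
      rw [neg_mul, Finset.sum_mul, ← Finset.sum_neg_distrib]
      refine Finset.sum_congr rfl fun i _ => ?_
      rw [div_pow, inv_pow]
      ring
  have hexp : ∀ w : ℂ, ‖w‖ < b → Complex.exp (h w) = g.eval w := by
    intro w hw
    have h0 : (0:ℂ) ∈ closedBall (0:ℂ) b := mem_closedBall_self hb0.le
    rw [hhdef]
    simp only [Complex.exp_add, Complex.exp_sum]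
    rw [hlog 0 h0]
    have heach : ∀ i : Fin L, Complex.exp (Complex.log (1 - w / ζ i)) = 1 - w / ζ i :=
      fun i => Complex.exp_log (hne w hw i)
    rw [Finset.prod_congr rfl fun i _ => heach i]
    rw [eval_eq g 0, eval_eq g w, mul_assoc, ← Finset.prod_mul_distrib]
    congr 1
    refine Finset.prod_congr rfl fun i _ => ?_
    show (0 - ζ i) * (1 - w / ζ i) = w - ζ i
    field_simp [hζ0 i]
    ring
  have hball : ∀ w : ℂ, w ∈ ball (0:ℂ) b → ‖w‖ < b := fun w hw => mem_ball_zero_iff.1 hw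
  have hdh : ∀ w : ℂ, ‖w‖ < b → DifferentiableAt ℂ h w := by
    intro w hw
    rw [hhdef]
    refine (differentiableAt_const _).add ?_
    refine DifferentiableAt.fun_sum fun i _ => ?_
    refine DifferentiableAt.clog ?_ ?_
    · exact (differentiableAt_const _).sub (differentiableAt_id.div_const _)
    · rw [Complex.mem_slitPlane_iff]
      left
      have h1 : ‖w / ζ i‖ < 1 := hwz w hw i
      have h2 : (w / ζ i).re ≤ ‖w / ζ i‖ := Complex.re_le_norm _
      simp only [Complex.sub_re, Complex.one_re]
      linarith
  have hfh : ∀ w : ℂ, ‖w‖ < b → f w = h w := by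
    intro w hw
    have hdf : ∀ v : ℂ, ‖v‖ < b → DifferentiableAt ℂ f v := by
      intro v hv
      exact hf.differentiableAt (Filter.mem_of_superset
        (isOpen_ball.mem_nhds (mem_ball_zero_iff.2 hv)) ball_subset_closedBall)
    have hF : ∀ v ∈ ball (0:ℂ) b, fderivWithin ℂ (fun u => f u - h u) (ball (0:ℂ) b) v = 0 := by
      intro v hv
      have hv' : ‖v‖ < b := hball v hv
      have hdF : DifferentiableAt ℂ (fun u => f u - h u) v := (hdf v hv').sub (hdh v hv')
      have hder := hdF.hasDerivAt
      have hcexp : HasDerivAt (fun u => Complex.exp (f u - h u))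
          (Complex.exp (f v - h v) * deriv (fun u => f u - h u) v) v := hder.cexp
      have hone : (fun u => Complex.exp (f u - h u)) =ᶠ[nhds v] fun _ => 1 := by
        filter_upwards [isOpen_ball.mem_nhds hv] with u hu
        have hu' : ‖u‖ < b := hball u hu
        rw [Complex.exp_sub, hexp u hu', hlog u (ball_subset_closedBall hu),
          div_self (hroots u (ball_subset_closedBall hu))]
      have hz : Complex.exp (f v - h v) * deriv (fun u => f u - h u) v = 0 :=
        (hcexp.congr_of_eventuallyEq hone.symm).unique (hasDerivAt_const v 1)
      have hd0 : deriv (fun u => f u - h u) v = 0 := by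
        rcases mul_eq_zero.1 hz with h' | h'
        · exact absurd h' (Complex.exp_ne_zero _)
        · exact h'
      have hF0 : HasFDerivAt (fun u => f u - h u) (0 : ℂ →L[ℂ] ℂ) v := by
        have h1 := hder.hasFDerivAt
        rw [hd0] at h1
        simpa using h1
      rw [fderivWithin_eq_fderiv (isOpen_ball.uniqueDiffWithinAt hv) hdF, hF0.fderiv]
    have hconst := (convex_ball (0:ℂ) b).is_const_of_fderivWithin_eq_zero
      (fun v hv => ((hdf v (hball v hv)).sub (hdh v (hball v hv))).differentiableWithinAt)
      hF (mem_ball_zero_iff.2 hw) (mem_ball_self hb0)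
    have hh0 : h 0 = f 0 := by simp [hhdef]
    have : f w - h w = f 0 - h 0 := hconst
    rw [hh0] at this
    linear_combination this
  have hcb : ∀ n : ℕ, 1 ≤ n → ‖c n‖ ≤ N / (n * b ^ n) := by
    intro n hn
    have hn0 : n ≠ 0 := by omega
    rw [hcdef]
    simp only [if_neg hn0, norm_neg]
    calc ‖∑ i : Fin L, (ζ i)⁻¹ ^ n / (n:ℂ)‖ ≤ ∑ i : Fin L, ‖(ζ i)⁻¹ ^ n / (n:ℂ)‖ :=
          norm_sum_le _ _
      _ ≤ ∑ _i : Fin L, 1 / (n * b ^ n) := by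
          refine Finset.sum_le_sum fun i _ => ?_
          rw [norm_div, norm_pow, norm_inv, Complex.norm_natCast]
          rw [div_le_div_iff₀ (by positivity) (by positivity)]
          have h1 : ‖ζ i‖⁻¹ ≤ b⁻¹ := by
            rw [inv_le_inv₀ (lt_trans hb0 (hζ i)) hb0]
            exact (hζ i).le
          have h2 : ‖ζ i‖⁻¹ ^ n ≤ b⁻¹ ^ n := by
            exact pow_le_pow_left₀ (by positivity) h1 n
          have h3 : b⁻¹ ^ n * b ^ n = 1 := by
            rw [← mul_pow, inv_mul_cancel₀ hb0.ne', one_pow]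
          calc ‖ζ i‖⁻¹ ^ n * ((n:ℝ) * b ^ n) = (‖ζ i‖⁻¹ ^ n * b ^ n) * n := by ring
            _ ≤ (b⁻¹ ^ n * b ^ n) * n := by
                refine mul_le_mul_of_nonneg_right ?_ (by positivity)
                exact mul_le_mul_of_nonneg_right h2 (by positivity)
            _ = 1 * n := by rw [h3]
      _ = L * (1 / (n * b ^ n)) := by rw [Finset.sum_const, Finset.card_univ,
            Fintype.card_fin, nsmul_eq_mul]
      _ ≤ N * (1 / (n * b ^ n)) := by
          refine mul_le_mul_of_nonneg_right ?_ (by positivity)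
          exact_mod_cast hLN
      _ = N / (n * b ^ n) := by ring
  have hps : HasFPowerSeriesOnBall f (FormalMultilinearSeries.ofScalars ℂ c) 0
      (ENNReal.ofReal b) := by
    constructor
    · rw [ENNReal.ofReal_eq_coe_nnreal hb0.le]
      apply FormalMultilinearSeries.le_radius_of_bound _ (max (N:ℝ) ‖f 0‖)
      intro n
      rw [FormalMultilinearSeries.ofScalars_norm]
      rcases Nat.eq_zero_or_pos n with rfl | hn
      · simp [hcdef]
      · have h1 := hcb n hn
        have h2 : ‖c n‖ * b ^ n ≤ (N / (n * b ^ n)) * b ^ n := by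
          exact mul_le_mul_of_nonneg_right h1 (by positivity)
        refine le_trans h2 (le_trans ?_ (le_max_left _ _))
        rw [div_mul_eq_mul_div, mul_comm (n:ℝ), ← div_div, mul_div_assoc,
          div_self (by positivity : (b:ℝ) ^ n ≠ 0), mul_one]
        have : (1:ℝ) ≤ n := by exact_mod_cast hn
        calc (N:ℝ) / n ≤ (N:ℝ) / 1 := by
              apply div_le_div_of_nonneg_left (by positivity) one_pos this
          _ = N := div_one _
    · exact ENNReal.ofReal_pos.2 hb0
    · intro y hy
      have hy' : ‖y‖ < b := by
        have := EMetric.mem_ball.1 hy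
        rw [edist_zero_right] at this
        rw [← dist_zero_right]
        exact (edist_lt_ofReal).1 (by rwa [edist_zero_right])
      have := hsum y hy'
      rw [← hfh y hy'] at this
      have heq : (fun n => (FormalMultilinearSeries.ofScalars ℂ c n) fun _ => y)
          = fun n => c n * y ^ n := by
        funext n
        rw [FormalMultilinearSeries.ofScalars_apply_eq, smul_eq_mul]
      rw [heq, zero_add]
      exact this
  have hcoeff : ∀ k : ℕ, iteratedDeriv k f 0 = ((Nat.factorial k : ℕ) : ℂ) * c k := by
    intro k
    have h1 := hps.factorial_smul (1:ℂ) k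
    rw [iteratedDeriv_eq_iteratedFDeriv, ← h1, FormalMultilinearSeries.ofScalars_apply_eq]
    simp [mul_comm]
  intro z hz1
  have hzb : ‖z‖ < b := lt_of_le_of_lt hz1 hb
  have hS : HasSum (fun n => c n * z ^ n) (f z) := by
    have := hsum z hzb
    rwa [← hfh z hzb] at this
  have hterm : ∀ k : ℕ, (iteratedDeriv k f 0 / ((Nat.factorial k : ℕ) : ℂ)) * z ^ k = c k * z ^ k := by
    intro k
    have hfac : (((Nat.factorial k : ℕ)) : ℂ) ≠ 0 := by
      exact_mod_cast Nat.factorial_ne_zero k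
    rw [hcoeff k, mul_comm (((Nat.factorial k : ℕ)) : ℂ) (c k), mul_div_assoc,
      div_self hfac, mul_one]
  rw [Finset.sum_congr rfl fun k _ => hterm k]
  have htail := Summable.sum_add_tsum_nat_add (f := fun n => c n * z ^ n) (K+1) hS.summable
  have hkey : f z - ∑ k ∈ Finset.range (K+1), c k * z ^ k
      = ∑' i : ℕ, c (i + (K+1)) * z ^ (i + (K+1)) := by
    rw [sub_eq_iff_eq_add, ← hS.tsum_eq, ← htail]
    exact add_comm _ _
  rw [hkey]
  have hbi0 : (0:ℝ) ≤ b⁻¹ := by positivity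
  have hbi1 : b⁻¹ < 1 := by
    rw [inv_lt_one_iff₀]; right; exact hb
  have hgeo : HasSum (fun i : ℕ => ((N:ℝ)/(K+1)) * (b⁻¹^(K+1) * b⁻¹^i))
      (((N:ℝ)/(K+1)) * (b⁻¹^(K+1) * (1 - b⁻¹)⁻¹)) :=
    ((hasSum_geometric_of_lt_one hbi0 hbi1).mul_left _).mul_left _
  refine le_trans (tsum_of_norm_bounded hgeo ?_) ?_
  · intro i
    have h1 : ‖c (i + (K+1)) * z ^ (i + (K+1))‖ ≤ ‖c (i + (K+1))‖ := by
      rw [norm_mul, norm_pow]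
      calc ‖c (i + (K+1))‖ * ‖z‖ ^ (i + (K+1)) ≤ ‖c (i + (K+1))‖ * 1 := by
            refine mul_le_mul_of_nonneg_left ?_ (norm_nonneg _)
            exact pow_le_one₀ (norm_nonneg z) hz1
        _ = _ := mul_one _
    refine le_trans (le_trans h1 (hcb _ (by omega))) ?_
    have hle : ((K:ℝ)+1) ≤ ((i + (K+1) : ℕ) : ℝ) := by push_cast; linarith [Nat.cast_nonneg (α := ℝ) i]
    calc (N:ℝ) / ((i + (K+1) : ℕ) * b ^ (i + (K+1)))
        ≤ (N:ℝ) / (((K:ℝ)+1) * b ^ (i + (K+1))) := by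
          apply div_le_div_of_nonneg_left (by positivity) (by positivity)
          refine mul_le_mul_of_nonneg_right hle (by positivity)
      _ = ((N:ℝ)/(K+1)) * (b⁻¹^(K+1) * b⁻¹^i) := by
          have hbne : (b:ℝ) ≠ 0 := hb0.ne'
          have hKne : ((K:ℝ)+1) ≠ 0 := by positivity
          rw [pow_add, inv_pow, inv_pow]
          field_simp
  · have hbm : (0:ℝ) < b - 1 := by linarith
    have hne2 : (b:ℝ)^K * (b-1) ≠ 0 := ne_of_gt (mul_pos (pow_pos hb0 K) hbm)
    have heq : b⁻¹^(K+1) * (1 - b⁻¹)⁻¹ = 1 / (b^K * (b-1)) := by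
      have h1 : (1:ℝ) - b⁻¹ = (b-1)/b := by
        field_simp
      rw [h1, inv_div, eq_div_iff hne2, inv_pow, pow_succ]
      field_simp
    rw [heq]
end

section
/- Golden–Thompson inequality: for any two Hermitian matrices A and B on a finite-dimensional Hilbert space, Tr(exp(A + B)) ≤ Tr(exp(A) · exp(B)). -/
open NormedSpace Matrix Finset

namespace GTaux

variable {d : ℕ}

lemma semiconj_pow {R : Type*} [Monoid R] (a b : R) (n : ℕ) :
    a * (b * a) ^ n = (a * b) ^ n * a :=
  (SemiconjBy.pow_right (by simp [SemiconjBy, mul_assoc]) n)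

lemma mul_pow_mul {R : Type*} [Monoid R] (a b : R) (m : ℕ) :
    (a * b) ^ (m + 1) = a * (b * a) ^ m * b := by
  rw [pow_succ, ← mul_assoc, ← semiconj_pow]

lemma trace_pow_mul_comm (P Q : Matrix (Fin d) (Fin d) ℂ) (m : ℕ) :
    ((P * Q) ^ m).trace = ((Q * P) ^ m).trace := by
  cases m with
  | zero => simp
  | succ m => rw [mul_pow_mul, Matrix.trace_mul_cycle, ← pow_succ']

/-- Frobenius Gram trace: `Tr(M Mᴴ).re = ∑ |M i j|²`. -/
lemma trace_mul_conjTranspose_re (M : Matrix (Fin d) (Fin d) ℂ) :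
    (M * Mᴴ).trace.re = ∑ i, ∑ j, ‖M i j‖ ^ 2 := by
  simp only [Matrix.trace, Matrix.diag, Matrix.mul_apply, Matrix.conjTranspose_apply]
  rw [Complex.re_sum]
  refine Finset.sum_congr rfl fun i _ => ?_
  rw [Complex.re_sum]
  refine Finset.sum_congr rfl fun j _ => ?_
  rw [Complex.sq_norm, Complex.normSq_apply]
  simp [Complex.mul_re]

lemma trace_mul_conjTranspose_re_nonneg (M : Matrix (Fin d) (Fin d) ℂ) :
    0 ≤ (M * Mᴴ).trace.re := by
  rw [trace_mul_conjTranspose_re]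
  positivity

/-- Cauchy–Schwarz for the trace. -/
lemma trace_mul_re_le (U V : Matrix (Fin d) (Fin d) ℂ) :
    (U * V).trace.re ≤
      Real.sqrt ((U * Uᴴ).trace.re) * Real.sqrt ((V * Vᴴ).trace.re) := by
  set f : Fin d × Fin d → ℝ := fun p => ‖U p.1 p.2‖ with hf
  set g : Fin d × Fin d → ℝ := fun p => ‖V p.2 p.1‖ with hg
  have h1 : (U * V).trace.re ≤ ∑ p : Fin d × Fin d, f p * g p := by
    calc (U * V).trace.re ≤ ‖(U * V).trace‖ := Complex.re_le_norm _
      _ ≤ ∑ i, ‖∑ j, U i j * V j i‖ := by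
          simp only [Matrix.trace, Matrix.diag, Matrix.mul_apply]
          exact norm_sum_le _ _
      _ ≤ ∑ i, ∑ j, ‖U i j‖ * ‖V j i‖ := by
          refine Finset.sum_le_sum fun i _ => ?_
          refine (norm_sum_le _ _).trans ?_
          exact le_of_eq (Finset.sum_congr rfl fun j _ => norm_mul _ _)
      _ = ∑ p : Fin d × Fin d, f p * g p := by rw [Fintype.sum_prod_type]
  have hU : ∑ p : Fin d × Fin d, f p ^ 2 = (U * Uᴴ).trace.re := by
    rw [trace_mul_conjTranspose_re, Fintype.sum_prod_type]
  have hV : ∑ p : Fin d × Fin d, g p ^ 2 = (V * Vᴴ).trace.re := by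
    rw [trace_mul_conjTranspose_re, Fintype.sum_prod_type]
    exact Finset.sum_comm
  have hcs := Finset.sum_mul_sq_le_sq_mul_sq Finset.univ f g
  refine h1.trans ?_
  calc (∑ p : Fin d × Fin d, f p * g p)
      ≤ |∑ p : Fin d × Fin d, f p * g p| := le_abs_self _
    _ = Real.sqrt ((∑ p : Fin d × Fin d, f p * g p) ^ 2) := (Real.sqrt_sq_eq_abs _).symm
    _ ≤ Real.sqrt ((∑ p : Fin d × Fin d, f p ^ 2) * ∑ p : Fin d × Fin d, g p ^ 2) :=
        Real.sqrt_le_sqrt hcs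
    _ = Real.sqrt ((U * Uᴴ).trace.re) * Real.sqrt ((V * Vᴴ).trace.re) := by
        rw [Real.sqrt_mul (by rw [hU]; exact trace_mul_conjTranspose_re_nonneg U), hU, hV]

end GTaux

namespace GTaux2
open GTaux

variable {d : ℕ}

lemma trace_mul_self_re_le (N : Matrix (Fin d) (Fin d) ℂ) :
    (N * N).trace.re ≤ (N * Nᴴ).trace.re := by
  have h := trace_mul_re_le N N
  rwa [Real.mul_self_sqrt (trace_mul_conjTranspose_re_nonneg N)] at h

lemma herm_mul_self {X : Matrix (Fin d) (Fin d) ℂ} (hX : X.IsHermitian) :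
    (X * X).IsHermitian := by
  rw [Matrix.IsHermitian, Matrix.conjTranspose_mul, hX.eq]

lemma herm_mul_conjTranspose (C : Matrix (Fin d) (Fin d) ℂ) :
    (C * Cᴴ).IsHermitian := by
  rw [Matrix.IsHermitian, Matrix.conjTranspose_mul, Matrix.conjTranspose_conjTranspose]

set_option maxHeartbeats 1000000 in
lemma main_ind (k : ℕ) :
    (∀ X Y : Matrix (Fin d) (Fin d) ℂ, X.IsHermitian → Y.IsHermitian →
       ((X * Y) ^ 2 ^ k).trace.re ≤ (X ^ 2 ^ k * Y ^ 2 ^ k).trace.re) ∧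
    (∀ C : Matrix (Fin d) (Fin d) ℂ,
       (C ^ 2 ^ k * Cᴴ ^ 2 ^ k).trace.re ≤ ((C * Cᴴ) ^ 2 ^ k).trace.re) := by
  have hpow : ∀ (j : ℕ) (x : Matrix (Fin d) (Fin d) ℂ),
      x ^ 2 ^ (j + 1) = x ^ 2 ^ j * x ^ 2 ^ j := by
    intro j x
    rw [pow_succ (2 : ℕ) j, pow_mul, pow_two]
  have hpow2 : ∀ (j : ℕ) (x : Matrix (Fin d) (Fin d) ℂ),
      x ^ 2 ^ (j + 1) = (x * x) ^ 2 ^ j := by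
    intro j x
    rw [pow_succ' (2 : ℕ) j, pow_mul, pow_two]
  induction k with
  | zero => constructor <;> intros <;> simp
  | succ k ih =>
    obtain ⟨S, T⟩ := ih
    constructor
    · intro X Y hX hY
      have hct : ((X * Y) ^ 2 ^ k)ᴴ = ((X * Y)ᴴ) ^ 2 ^ k := Matrix.conjTranspose_pow _ _
      have hXY : (X * Y)ᴴ = Y * X := by
        rw [Matrix.conjTranspose_mul, hX.eq, hY.eq]
      calc ((X * Y) ^ 2 ^ (k + 1)).trace.re
          = ((X * Y) ^ 2 ^ k * (X * Y) ^ 2 ^ k).trace.re := by rw [hpow]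
        _ ≤ ((X * Y) ^ 2 ^ k * ((X * Y) ^ 2 ^ k)ᴴ).trace.re := trace_mul_self_re_le _
        _ = ((X * Y) ^ 2 ^ k * ((X * Y)ᴴ) ^ 2 ^ k).trace.re := by rw [hct]
        _ ≤ (((X * Y) * (X * Y)ᴴ) ^ 2 ^ k).trace.re := T (X * Y)
        _ = ((X * (Y * Y) * X) ^ 2 ^ k).trace.re := by
            rw [hXY]
            congr 2
            noncomm_ring
        _ = ((X * (X * (Y * Y))) ^ 2 ^ k).trace.re := by
            rw [trace_pow_mul_comm (X * (Y * Y)) X]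
        _ = (((X * X) * (Y * Y)) ^ 2 ^ k).trace.re := by rw [mul_assoc]
        _ ≤ ((X * X) ^ 2 ^ k * (Y * Y) ^ 2 ^ k).trace.re :=
            S _ _ (herm_mul_self hX) (herm_mul_self hY)
        _ = (X ^ 2 ^ (k + 1) * Y ^ 2 ^ (k + 1)).trace.re := by rw [hpow2, hpow2]
    · intro C
      set P := C * Cᴴ with hP
      set Q := Cᴴ * C with hQ
      have hPh : P.IsHermitian := herm_mul_conjTranspose C
      have hQh : Q.IsHermitian := by
        have := herm_mul_conjTranspose Cᴴ
        rwa [Matrix.conjTranspose_conjTranspose] at this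
      have hPQtr : ∀ n : ℕ, (Q ^ n).trace = (P ^ n).trace := fun n =>
        trace_pow_mul_comm Cᴴ C n
      have ht0 : 0 ≤ (P ^ 2 ^ (k + 1)).trace.re := by
        have : P ^ 2 ^ (k + 1) = P ^ 2 ^ k * (P ^ 2 ^ k)ᴴ := by
          rw [Matrix.conjTranspose_pow, hPh.eq, hpow]
        rw [this]
        exact trace_mul_conjTranspose_re_nonneg _
      calc (C ^ 2 ^ (k + 1) * Cᴴ ^ 2 ^ (k + 1)).trace.re
          = ((C * C) ^ 2 ^ k * ((C * C)ᴴ) ^ 2 ^ k).trace.re := by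
            rw [hpow2, hpow2, Matrix.conjTranspose_mul]
        _ ≤ (((C * C) * (C * C)ᴴ) ^ 2 ^ k).trace.re := T (C * C)
        _ = ((C * (C * Cᴴ * Cᴴ)) ^ 2 ^ k).trace.re := by
            rw [Matrix.conjTranspose_mul]
            congr 2
            noncomm_ring
        _ = (((C * Cᴴ * Cᴴ) * C) ^ 2 ^ k).trace.re := by
            rw [trace_pow_mul_comm]
        _ = ((P * Q) ^ 2 ^ k).trace.re := by
            rw [hP, hQ]
            congr 2
            noncomm_ring
        _ ≤ (P ^ 2 ^ k * Q ^ 2 ^ k).trace.re := S _ _ hPh hQh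
        _ ≤ Real.sqrt ((P ^ 2 ^ k * (P ^ 2 ^ k)ᴴ).trace.re) *
              Real.sqrt ((Q ^ 2 ^ k * (Q ^ 2 ^ k)ᴴ).trace.re) := trace_mul_re_le (P ^ 2 ^ k) (Q ^ 2 ^ k)
        _ = Real.sqrt ((P ^ 2 ^ (k + 1)).trace.re) *
              Real.sqrt ((Q ^ 2 ^ (k + 1)).trace.re) := by
            rw [Matrix.conjTranspose_pow, Matrix.conjTranspose_pow, hPh.eq, hQh.eq,
              ← hpow, ← hpow]
        _ = (P ^ 2 ^ (k + 1)).trace.re := by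
            rw [hPQtr]
            exact Real.mul_self_sqrt ht0
        _ = ((C * Cᴴ) ^ 2 ^ (k + 1)).trace.re := by rw [hP]

end GTaux2
open NormedSpace Filter

namespace GTanalysis

variable {𝔸 : Type*} [NormedRing 𝔸] [NormedAlgebra ℂ 𝔸] [CompleteSpace 𝔸] [NormOneClass 𝔸]

lemma real_exp_tsum (r : ℝ) : Real.exp r = ∑' n : ℕ, r ^ n / n.factorial := by
  rw [Real.exp_eq_exp_ℝ, exp_eq_tsum_div]

lemma term_le (x : 𝔸) (n : ℕ) :
    ‖(n.factorial : ℂ)⁻¹ • x ^ n‖ ≤ ‖x‖ ^ n / n.factorial := by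
  rw [norm_smul, norm_inv, Complex.norm_natCast, div_eq_inv_mul]
  have h0 : (0:ℝ) ≤ (n.factorial : ℝ)⁻¹ := by positivity
  exact mul_le_mul_of_nonneg_left (norm_pow_le x n) h0

lemma norm_exp_le (x : 𝔸) : ‖exp x‖ ≤ Real.exp ‖x‖ := by
  rw [exp_eq_tsum ℂ]
  refine (norm_tsum_le_tsum_norm (norm_expSeries_summable' x)).trans ?_
  rw [real_exp_tsum]
  exact Summable.tsum_le_tsum (term_le x) (norm_expSeries_summable' x)
    (Real.summable_pow_div_factorial ‖x‖)

lemma norm_exp_sub_one_sub_le (x : 𝔸) :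
    ‖exp x - 1 - x‖ ≤ ‖x‖ ^ 2 * Real.exp ‖x‖ := by
  have hsum : Summable fun n : ℕ => (n.factorial : ℂ)⁻¹ • x ^ n := expSeries_summable' x
  have hsplit := Summable.sum_add_tsum_nat_add 2 hsum
  have hrange : (∑ i ∈ Finset.range 2, (i.factorial : ℂ)⁻¹ • x ^ i) = 1 + x := by
    simp [Finset.sum_range_succ]
  have hx : exp x - 1 - x = ∑' n : ℕ, ((n + 2).factorial : ℂ)⁻¹ • x ^ (n + 2) := by
    rw [exp_eq_tsum ℂ]
    dsimp only
    rw [← hsplit, hrange]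
    abel
  rw [hx]
  have hsum2 : Summable fun n : ℕ => ‖((n + 2).factorial : ℂ)⁻¹ • x ^ (n + 2)‖ :=
    (summable_nat_add_iff 2).mpr (norm_expSeries_summable' x)
  refine (norm_tsum_le_tsum_norm hsum2).trans ?_
  have hmaj : ∀ n : ℕ, ‖((n + 2).factorial : ℂ)⁻¹ • x ^ (n + 2)‖ ≤
      ‖x‖ ^ 2 * (‖x‖ ^ n / n.factorial) := by
    intro n
    refine (term_le x (n + 2)).trans ?_
    have h1 : (((n + 2).factorial : ℝ))⁻¹ ≤ ((n.factorial : ℝ))⁻¹ := by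
      refine inv_anti₀ (by positivity) ?_
      exact_mod_cast Nat.factorial_le (by omega)
    rw [div_eq_mul_inv, div_eq_mul_inv]
    calc ‖x‖ ^ (n + 2) * (((n + 2).factorial : ℝ))⁻¹
        ≤ ‖x‖ ^ (n + 2) * ((n.factorial : ℝ))⁻¹ :=
          mul_le_mul_of_nonneg_left h1 (by positivity)
      _ = ‖x‖ ^ 2 * (‖x‖ ^ n * ((n.factorial : ℝ))⁻¹) := by rw [pow_add]; ring
  refine (Summable.tsum_le_tsum hmaj hsum2 ?_).trans ?_
  · exact (Real.summable_pow_div_factorial ‖x‖).mul_left _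
  · rw [tsum_mul_left, real_exp_tsum]

lemma pow_sub_pow_norm_le (X Y : 𝔸) {M : ℝ} (hX : ‖X‖ ≤ M) (hY : ‖Y‖ ≤ M) :
    ∀ n : ℕ, ‖X ^ (n + 1) - Y ^ (n + 1)‖ ≤ (n + 1) * M ^ n * ‖X - Y‖ := by
  have hM0 : 0 ≤ M := le_trans (norm_nonneg X) hX
  intro n
  induction n with
  | zero => simp
  | succ n ih =>
      have key : X ^ (n + 2) - Y ^ (n + 2)
          = X * (X ^ (n + 1) - Y ^ (n + 1)) + (X - Y) * Y ^ (n + 1) := by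
        rw [mul_sub, sub_mul, ← pow_succ' X, ← pow_succ' Y]
        abel
      calc ‖X ^ (n + 2) - Y ^ (n + 2)‖
          ≤ ‖X * (X ^ (n + 1) - Y ^ (n + 1))‖ + ‖(X - Y) * Y ^ (n + 1)‖ := by
            rw [key]; exact norm_add_le _ _
        _ ≤ ‖X‖ * ‖X ^ (n + 1) - Y ^ (n + 1)‖ + ‖X - Y‖ * ‖Y ^ (n + 1)‖ :=
            add_le_add (norm_mul_le _ _) (norm_mul_le _ _)
        _ ≤ M * ((n + 1) * M ^ n * ‖X - Y‖) + ‖X - Y‖ * M ^ (n + 1) := by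
            refine add_le_add ?_ ?_
            · exact mul_le_mul hX ih (norm_nonneg _) hM0
            · refine mul_le_mul_of_nonneg_left ?_ (norm_nonneg _)
              exact (norm_pow_le Y (n + 1)).trans (pow_le_pow_left₀ (norm_nonneg _) hY _)
        _ = ((n : ℝ) + 1 + 1) * M ^ (n + 1) * ‖X - Y‖ := by ring
        _ = ((n + 1 : ℕ) + 1) * M ^ (n + 1) * ‖X - Y‖ := by push_cast; ring

/-- The constant in the one-step Lie–Trotter estimate. -/
noncomputable def trotterConst (A B : 𝔸) : ℝ :=
  ‖A‖ ^ 2 * Real.exp ‖A‖ * Real.exp ‖B‖ + ‖B‖ ^ 2 * Real.exp ‖B‖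
    + ‖A‖ * (‖B‖ ^ 2 * Real.exp ‖B‖ + ‖B‖) + ‖A + B‖ ^ 2 * Real.exp ‖A + B‖

lemma trotter_step (A B : 𝔸) {t : ℝ} (ht0 : 0 ≤ t) (ht1 : t ≤ 1) :
    ‖exp ((t : ℂ) • A) * exp ((t : ℂ) • B) - exp ((t : ℂ) • (A + B))‖ ≤
      t ^ 2 * trotterConst A B := by
  set a' : 𝔸 := (t : ℂ) • A with ha'
  set b' : 𝔸 := (t : ℂ) • B with hb'
  set EA := exp a' with hEA
  set EB := exp b' with hEB
  set EC := exp ((t : ℂ) • (A + B)) with hEC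
  have hna : ‖a'‖ = t * ‖A‖ := by
    rw [ha', norm_smul, Complex.norm_real, Real.norm_eq_abs, abs_of_nonneg ht0]
  have hnb : ‖b'‖ = t * ‖B‖ := by
    rw [hb', norm_smul, Complex.norm_real, Real.norm_eq_abs, abs_of_nonneg ht0]
  have hnc : ‖(t : ℂ) • (A + B)‖ = t * ‖A + B‖ := by
    rw [norm_smul, Complex.norm_real, Real.norm_eq_abs, abs_of_nonneg ht0]
  have htA : t * ‖A‖ ≤ ‖A‖ := by nlinarith [norm_nonneg A]
  have htB : t * ‖B‖ ≤ ‖B‖ := by nlinarith [norm_nonneg B]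
  have htC : t * ‖A + B‖ ≤ ‖A + B‖ := by nlinarith [norm_nonneg (A + B)]
  have key : EA * EB - EC =
      (EA - 1 - a') * EB + (EB - 1 - b') + a' * (EB - 1)
        - (EC - 1 - ((t : ℂ) • (A + B))) := by
    have hc : (t : ℂ) • (A + B) = a' + b' := by rw [ha', hb', smul_add]
    rw [hc]
    noncomm_ring
  have h1 : ‖EA - 1 - a'‖ ≤ t ^ 2 * (‖A‖ ^ 2 * Real.exp ‖A‖) := by
    refine (norm_exp_sub_one_sub_le a').trans ?_
    rw [hna]
    calc (t * ‖A‖) ^ 2 * Real.exp (t * ‖A‖) ≤ (t * ‖A‖) ^ 2 * Real.exp ‖A‖ := by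
          exact mul_le_mul_of_nonneg_left (Real.exp_le_exp.mpr htA) (by positivity)
      _ = t ^ 2 * (‖A‖ ^ 2 * Real.exp ‖A‖) := by ring
  have h2 : ‖EB - 1 - b'‖ ≤ t ^ 2 * (‖B‖ ^ 2 * Real.exp ‖B‖) := by
    refine (norm_exp_sub_one_sub_le b').trans ?_
    rw [hnb]
    calc (t * ‖B‖) ^ 2 * Real.exp (t * ‖B‖) ≤ (t * ‖B‖) ^ 2 * Real.exp ‖B‖ := by
          exact mul_le_mul_of_nonneg_left (Real.exp_le_exp.mpr htB) (by positivity)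
      _ = t ^ 2 * (‖B‖ ^ 2 * Real.exp ‖B‖) := by ring
  have hEBnorm : ‖EB‖ ≤ Real.exp ‖B‖ := by
    refine (norm_exp_le b').trans ?_
    rw [hnb]; exact Real.exp_le_exp.mpr htB
  have h4 : ‖EC - 1 - ((t : ℂ) • (A + B))‖ ≤ t ^ 2 * (‖A + B‖ ^ 2 * Real.exp ‖A + B‖) := by
    refine (norm_exp_sub_one_sub_le _).trans ?_
    rw [hnc]
    calc (t * ‖A + B‖) ^ 2 * Real.exp (t * ‖A + B‖)
        ≤ (t * ‖A + B‖) ^ 2 * Real.exp ‖A + B‖ := by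
          exact mul_le_mul_of_nonneg_left (Real.exp_le_exp.mpr htC) (by positivity)
      _ = t ^ 2 * (‖A + B‖ ^ 2 * Real.exp ‖A + B‖) := by ring
  have hEB1 : ‖EB - 1‖ ≤ t * (‖B‖ ^ 2 * Real.exp ‖B‖ + ‖B‖) := by
    have : EB - 1 = (EB - 1 - b') + b' := by abel
    rw [this]
    refine (norm_add_le _ _).trans ?_
    have ht2 : t ^ 2 ≤ t := by nlinarith
    have := h2
    rw [hnb]
    nlinarith [norm_nonneg B, Real.exp_pos ‖B‖, sq_nonneg ‖B‖,
      mul_le_mul_of_nonneg_right ht2 (mul_nonneg (sq_nonneg ‖B‖) (Real.exp_pos ‖B‖).le)]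
  have h3 : ‖a' * (EB - 1)‖ ≤ t ^ 2 * (‖A‖ * (‖B‖ ^ 2 * Real.exp ‖B‖ + ‖B‖)) := by
    refine (norm_mul_le _ _).trans ?_
    rw [hna]
    calc t * ‖A‖ * ‖EB - 1‖ ≤ t * ‖A‖ * (t * (‖B‖ ^ 2 * Real.exp ‖B‖ + ‖B‖)) := by
          refine mul_le_mul_of_nonneg_left hEB1 (by positivity)
      _ = t ^ 2 * (‖A‖ * (‖B‖ ^ 2 * Real.exp ‖B‖ + ‖B‖)) := by ring
  have h1' : ‖(EA - 1 - a') * EB‖ ≤ t ^ 2 * (‖A‖ ^ 2 * Real.exp ‖A‖ * Real.exp ‖B‖) := by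
    refine (norm_mul_le _ _).trans ?_
    calc ‖EA - 1 - a'‖ * ‖EB‖ ≤ (t ^ 2 * (‖A‖ ^ 2 * Real.exp ‖A‖)) * Real.exp ‖B‖ :=
          mul_le_mul h1 hEBnorm (norm_nonneg _) (by positivity)
      _ = t ^ 2 * (‖A‖ ^ 2 * Real.exp ‖A‖ * Real.exp ‖B‖) := by ring
  calc ‖EA * EB - EC‖
      ≤ ‖(EA - 1 - a') * EB‖ + ‖EB - 1 - b'‖ + ‖a' * (EB - 1)‖
        + ‖EC - 1 - ((t : ℂ) • (A + B))‖ := by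
        rw [key]
        refine (norm_sub_le _ _).trans ?_
        gcongr
        exact (norm_add_le _ _).trans (by gcongr; exact norm_add_le _ _)
    _ ≤ t ^ 2 * (‖A‖ ^ 2 * Real.exp ‖A‖ * Real.exp ‖B‖) + t ^ 2 * (‖B‖ ^ 2 * Real.exp ‖B‖)
        + t ^ 2 * (‖A‖ * (‖B‖ ^ 2 * Real.exp ‖B‖ + ‖B‖))
        + t ^ 2 * (‖A + B‖ ^ 2 * Real.exp ‖A + B‖) := by
        exact add_le_add (add_le_add (add_le_add h1' h2) h3) h4
    _ = t ^ 2 * trotterConst A B := by rw [trotterConst]; ring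


lemma trotter_tendsto (A B : 𝔸) :
    Tendsto (fun k : ℕ =>
      ‖(exp (((((2:ℝ) ^ k)⁻¹ : ℝ) : ℂ) • A) * exp (((((2:ℝ) ^ k)⁻¹ : ℝ) : ℂ) • B)) ^ (2 ^ k)
        - exp (A + B)‖) atTop (nhds 0) := by
  set K : ℝ := Real.exp (‖A‖ + ‖B‖) * trotterConst A B with hK
  have hbound : ∀ k : ℕ,
      ‖(exp (((((2:ℝ) ^ k)⁻¹ : ℝ) : ℂ) • A) * exp (((((2:ℝ) ^ k)⁻¹ : ℝ) : ℂ) • B)) ^ (2 ^ k)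
        - exp (A + B)‖ ≤ ((2:ℝ) ^ k)⁻¹ * K := by
    intro k
    set t : ℝ := ((2:ℝ) ^ k)⁻¹ with htdef
    have ht0 : 0 ≤ t := by positivity
    have ht1 : t ≤ 1 := by
      rw [htdef]
      rw [inv_le_one_iff₀]
      right
      exact one_le_pow₀ (by norm_num)
    set X := exp ((t : ℂ) • A) * exp ((t : ℂ) • B) with hX
    set Y := exp ((t : ℂ) • (A + B)) with hY
    have hnt : ((2 ^ k : ℕ) : ℂ) * (t : ℂ) = 1 := by
      rw [htdef]
      push_cast
      rw [mul_inv_cancel₀ (pow_ne_zero k (two_ne_zero))]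
    have hYn : Y ^ (2 ^ k) = exp (A + B) := by
      letI : NormedAlgebra ℚ 𝔸 := NormedAlgebra.restrictScalars ℚ ℂ 𝔸
      rw [hY, ← NormedSpace.exp_nsmul, ← Nat.cast_smul_eq_nsmul ℂ, smul_smul, hnt, one_smul]
    set M : ℝ := Real.exp (t * (‖A‖ + ‖B‖)) with hM
    have hM1 : 1 ≤ M := Real.one_le_exp (by positivity)
    have hXM : ‖X‖ ≤ M := by
      rw [hX, hM]
      refine (norm_mul_le _ _).trans ?_
      have h1 : ‖exp ((t : ℂ) • A)‖ ≤ Real.exp (t * ‖A‖) := by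
        refine (norm_exp_le _).trans ?_
        rw [norm_smul, Complex.norm_real, Real.norm_eq_abs, abs_of_nonneg ht0]
      have h2 : ‖exp ((t : ℂ) • B)‖ ≤ Real.exp (t * ‖B‖) := by
        refine (norm_exp_le _).trans ?_
        rw [norm_smul, Complex.norm_real, Real.norm_eq_abs, abs_of_nonneg ht0]
      calc ‖exp ((t : ℂ) • A)‖ * ‖exp ((t : ℂ) • B)‖
          ≤ Real.exp (t * ‖A‖) * Real.exp (t * ‖B‖) :=
            mul_le_mul h1 h2 (norm_nonneg _) (Real.exp_pos _).le
        _ = Real.exp (t * (‖A‖ + ‖B‖)) := by rw [← Real.exp_add]; ring_nf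
    have hYM : ‖Y‖ ≤ M := by
      rw [hY, hM]
      refine (norm_exp_le _).trans ?_
      rw [norm_smul, Complex.norm_real, Real.norm_eq_abs, abs_of_nonneg ht0]
      refine Real.exp_le_exp.mpr ?_
      exact mul_le_mul_of_nonneg_left (norm_add_le A B) ht0
    have hMpow : M ^ (2 ^ k : ℕ) = Real.exp ((2 ^ k : ℕ) * (t * (‖A‖ + ‖B‖))) := by
      rw [hM, ← Real.exp_nat_mul]
    have hnt' : ((2 ^ k : ℕ) : ℝ) * t = 1 := by
      rw [htdef]; push_cast; rw [mul_inv_cancel₀ (by positivity)]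
    have hMn : M ^ (2 ^ k : ℕ) = Real.exp (‖A‖ + ‖B‖) := by
      rw [hMpow, ← mul_assoc, hnt', one_mul]
    obtain ⟨m, hm⟩ : ∃ m : ℕ, 2 ^ k = m + 1 :=
      ⟨2 ^ k - 1, (Nat.succ_pred_eq_of_pos (Nat.pow_pos (by norm_num : 0 < 2))).symm⟩
    have hstep := trotter_step A B ht0 ht1
    have hpowd := pow_sub_pow_norm_le X Y hXM hYM m
    rw [← hm] at hpowd
    have hMm : M ^ m ≤ M ^ (2 ^ k : ℕ) := by
      refine pow_le_pow_right₀ hM1 ?_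
      omega
    calc ‖X ^ (2 ^ k) - exp (A + B)‖ = ‖X ^ (2 ^ k) - Y ^ (2 ^ k)‖ := by rw [hYn]
      _ ≤ (m + 1) * M ^ m * ‖X - Y‖ := hpowd
      _ ≤ (m + 1) * M ^ m * (t ^ 2 * trotterConst A B) := by
          refine mul_le_mul_of_nonneg_left hstep (by positivity)
      _ ≤ ((2 ^ k : ℕ) : ℝ) * M ^ (2 ^ k : ℕ) * (t ^ 2 * trotterConst A B) := by
          have hc0 : 0 ≤ t ^ 2 * trotterConst A B :=
            le_trans (norm_nonneg _) hstep
          refine mul_le_mul_of_nonneg_right ?_ hc0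
          have : ((m : ℝ) + 1) = ((2 ^ k : ℕ) : ℝ) := by rw [hm]; push_cast; ring
          rw [this]
          exact mul_le_mul_of_nonneg_left hMm (by positivity)
      _ = (((2 ^ k : ℕ) : ℝ) * t) * t * (M ^ (2 ^ k : ℕ) * trotterConst A B) := by ring
      _ = t * K := by rw [hnt', hMn, hK, one_mul]
      _ = ((2:ℝ) ^ k)⁻¹ * K := by rw [htdef]
  have hlim : Tendsto (fun k : ℕ => ((2:ℝ) ^ k)⁻¹ * K) atTop (nhds 0) := by
    have h2 : Tendsto (fun k : ℕ => ((2:ℝ)⁻¹) ^ k) atTop (nhds 0) :=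
      tendsto_pow_atTop_nhds_zero_of_lt_one (by norm_num) (by norm_num)
    have := h2.mul_const K
    simpa [inv_pow] using this
  refine squeeze_zero (fun k => norm_nonneg _) hbound hlim

end GTanalysis

open NormedSpace Filter

set_option maxHeartbeats 1000000 in
/-- Golden–Thompson inequality: for Hermitian matrices `A, B`,
`Tr(exp(A + B)) ≤ Tr(exp A · exp B)`. -/
theorem golden_thompson
    {d : ℕ} (A B : Matrix (Fin d) (Fin d) ℂ)
    (hA : A.IsHermitian) (hB : B.IsHermitian) :
    (exp (A + B)).trace.re ≤ ((exp A) * (exp B)).trace.re := by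
  rcases Nat.eq_zero_or_pos d with hd | hd
  · subst hd
    simp [Matrix.trace]
  · haveI : Nonempty (Fin d) := Fin.pos_iff_nonempty.mp hd
    letI : SeminormedRing (Matrix (Fin d) (Fin d) ℂ) := Matrix.linftyOpSemiNormedRing
    letI : NormedRing (Matrix (Fin d) (Fin d) ℂ) := Matrix.linftyOpNormedRing
    letI : NormedAlgebra ℂ (Matrix (Fin d) (Fin d) ℂ) := Matrix.linftyOpNormedAlgebra
    have key : ∀ k : ℕ,
        (((exp (((((2:ℝ) ^ k)⁻¹ : ℝ) : ℂ) • A)) *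
            (exp (((((2:ℝ) ^ k)⁻¹ : ℝ) : ℂ) • B))) ^ (2 ^ k)).trace.re
          ≤ (exp A * exp B).trace.re := by
      intro k
      set c : ℂ := ((((2:ℝ) ^ k)⁻¹ : ℝ) : ℂ) with hc
      have hcstar : star c = c := by rw [hc, Complex.star_def, Complex.conj_ofReal]
      have hAh : (c • A).IsHermitian := by
        rw [Matrix.IsHermitian, Matrix.conjTranspose_smul, hcstar, hA.eq]
      have hBh : (c • B).IsHermitian := by
        rw [Matrix.IsHermitian, Matrix.conjTranspose_smul, hcstar, hB.eq]
      have hXh : (exp (c • A)).IsHermitian := Matrix.IsHermitian.exp hAh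
      have hYh : (exp (c • B)).IsHermitian := Matrix.IsHermitian.exp hBh
      have hcc : ((2 ^ k : ℕ) : ℂ) * c = 1 := by
        rw [hc]
        push_cast
        rw [mul_inv_cancel₀ (pow_ne_zero k (two_ne_zero))]
      have hXpow : (exp (c • A)) ^ (2 ^ k) = exp A := by
        rw [← Matrix.exp_nsmul, ← Nat.cast_smul_eq_nsmul ℂ, smul_smul, hcc, one_smul]
      have hYpow : (exp (c • B)) ^ (2 ^ k) = exp B := by
        rw [← Matrix.exp_nsmul, ← Nat.cast_smul_eq_nsmul ℂ, smul_smul, hcc, one_smul]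
      have hmain := (GTaux2.main_ind k).1 _ _ hXh hYh
      rwa [hXpow, hYpow] at hmain
    have htrace : ∀ M : Matrix (Fin d) (Fin d) ℂ, |M.trace.re| ≤ d * ‖M‖ := by
      intro M
      have hentry : ∀ i : Fin d, ‖M i i‖ ≤ ‖M‖ := by
        intro i
        have h2 : ‖M i i‖₊ ≤ ∑ j, ‖M i j‖₊ :=
          Finset.single_le_sum (f := fun j => ‖M i j‖₊) (fun j _ => zero_le)
            (Finset.mem_univ i)
        have h3 : (∑ j, ‖M i j‖₊) ≤ Finset.univ.sup (fun i => ∑ j, ‖M i j‖₊) :=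
          Finset.le_sup (f := fun i => ∑ j, ‖M i j‖₊) (Finset.mem_univ i)
        have h4 : ‖M i i‖₊ ≤ ‖M‖₊ := by
          rw [Matrix.linfty_opNNNorm_def]
          exact h2.trans h3
        calc ‖M i i‖ = ‖M i i‖ := rfl
          _ ≤ ‖M‖ := h4
      calc |M.trace.re| ≤ ‖M.trace‖ := Complex.abs_re_le_norm _
        _ ≤ ∑ i, ‖M i i‖ := by
            rw [Matrix.trace]
            exact norm_sum_le _ _
        _ ≤ ∑ _i : Fin d, ‖M‖ := Finset.sum_le_sum (fun i _ => hentry i)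
        _ = d * ‖M‖ := by
            rw [Finset.sum_const, Finset.card_univ, Fintype.card_fin, nsmul_eq_mul]
    have htd := GTanalysis.trotter_tendsto A B
    have hseq : Tendsto (fun k : ℕ =>
        (((exp (((((2:ℝ) ^ k)⁻¹ : ℝ) : ℂ) • A)) *
            (exp (((((2:ℝ) ^ k)⁻¹ : ℝ) : ℂ) • B))) ^ (2 ^ k)).trace.re) atTop
        (nhds ((exp (A + B)).trace.re)) := by
      rw [← tendsto_sub_nhds_zero_iff]
      refine squeeze_zero_norm (a := fun k => (d : ℝ) *
          ‖(((exp (((((2:ℝ) ^ k)⁻¹ : ℝ) : ℂ) • A)) *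
              (exp (((((2:ℝ) ^ k)⁻¹ : ℝ) : ℂ) • B))) ^ (2 ^ k)) - exp (A + B)‖)
        (fun k => ?_) ?_
      · rw [Real.norm_eq_abs]
        have h5 := htrace ((((exp (((((2:ℝ) ^ k)⁻¹ : ℝ) : ℂ) • A)) *
              (exp (((((2:ℝ) ^ k)⁻¹ : ℝ) : ℂ) • B))) ^ (2 ^ k)) - exp (A + B))
        rwa [Matrix.trace_sub, Complex.sub_re] at h5
      · have h6 := htd.const_mul (d : ℝ)
        rw [mul_zero] at h6
        exact h6
    exact le_of_tendsto' hseq key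
end
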